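/- For all n ≥ 0, pp̄(3n) ≡ (-1)^n · r₂(n) (mod 3), where r₂(n) is the number of representations of n as an ordered sum of two squares of integers. -/

import Mathlib

open PowerSeries Finset

noncomputable def ppbar (n : ℕ) : ℚ :=
  PowerSeries.coeff (R := ℚ) n (∏ k ∈ Finset.range (n + 1),
    ((1 + PowerSeries.X ^ (k + 1)) ^ 2 * ((1 - PowerSeries.X ^ (k + 1))⁻¹) ^ 2))

noncomputable def r2 (n : ℕ) : ℕ := Set.ncard {p : ℤ × ℤ | p.1 ^ 2 + p.2 ^ 2 = (n : ℤ)}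

namespace PPB


noncomputable def g {S : Type*} [CommRing S] (j : ℕ) : S⟦X⟧ :=
  PowerSeries.mk fun i => if j ∣ i then 1 else 0

noncomputable def h {S : Type*} [CommRing S] (j : ℕ) : S⟦X⟧ :=
  PowerSeries.mk fun i => if j ∣ i then (-1)^(i/j) else 0

variable {S : Type*} [CommRing S]

lemma coeff_g (j i : ℕ) : (coeff (R := S) i) (g j) = if j ∣ i then 1 else 0 := by
  simp [g]

lemma coeff_h (j i : ℕ) : (coeff (R := S) i) (h j) = if j ∣ i then (-1)^(i/j) else 0 := by
  simp [h]

lemma one_sub_mul_g (j : ℕ) (hj : 0 < j) : (1 - X^j) * (g j : S⟦X⟧) = 1 := by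
  ext m
  rw [sub_mul, one_mul, map_sub]
  rcases Nat.lt_or_ge m j with hm | hm
  · rw [PowerSeries.coeff_one]
    have h1 : (coeff (R := S) m) (X^j * (g j : S⟦X⟧)) = 0 := by
      rw [PowerSeries.coeff_X_pow_mul']
      simp [Nat.not_le.mpr hm]
    rw [h1, coeff_g, sub_zero]
    rcases Nat.eq_zero_or_pos m with rfl | hm0
    · simp
    · have hnd : ¬ (j ∣ m) := fun hd => absurd (Nat.le_of_dvd hm0 hd) (Nat.not_le.mpr hm)
      have hm0' : m ≠ 0 := by omega
      rw [if_neg hnd, if_neg hm0']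
  · have h1 : (coeff (R := S) m) (X^j * (g j : S⟦X⟧)) = (coeff (R := S) (m - j)) (g j) := by
      rw [PowerSeries.coeff_X_pow_mul']
      simp [hm]
    rw [h1, coeff_g, coeff_g, PowerSeries.coeff_one]
    have hdv : j ∣ m ↔ j ∣ m - j := by
      constructor
      · intro hd; exact (Nat.dvd_sub hd dvd_rfl)
      · intro hd; have := Nat.dvd_add hd (dvd_refl j); rwa [Nat.sub_add_cancel hm] at this
    have hm0 : m ≠ 0 := by omega
    by_cases hd : j ∣ m
    · rw [if_pos hd, if_pos (hdv.mp hd), if_neg hm0]; ring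
    · rw [if_neg hd, if_neg (fun hh => hd (hdv.mpr hh)), if_neg hm0]; ring

lemma one_add_mul_h (j : ℕ) (hj : 0 < j) : (1 + X^j) * (h j : S⟦X⟧) = 1 := by
  ext m
  rw [add_mul, one_mul, map_add]
  rcases Nat.lt_or_ge m j with hm | hm
  · rw [PowerSeries.coeff_one]
    have h1 : (coeff (R := S) m) (X^j * (h j : S⟦X⟧)) = 0 := by
      rw [PowerSeries.coeff_X_pow_mul']
      simp [Nat.not_le.mpr hm]
    rw [h1, coeff_h, add_zero]
    rcases Nat.eq_zero_or_pos m with rfl | hm0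
    · simp
    · have hnd : ¬ (j ∣ m) := fun hd => absurd (Nat.le_of_dvd hm0 hd) (Nat.not_le.mpr hm)
      have hm0' : m ≠ 0 := by omega
      rw [if_neg hnd, if_neg hm0']
  · have h1 : (coeff (R := S) m) (X^j * (h j : S⟦X⟧)) = (coeff (R := S) (m - j)) (h j) := by
      rw [PowerSeries.coeff_X_pow_mul']
      simp [hm]
    rw [h1, coeff_h, coeff_h, PowerSeries.coeff_one]
    have hdv : j ∣ m ↔ j ∣ m - j := by
      constructor
      · intro hd; exact (Nat.dvd_sub hd dvd_rfl)
      · intro hd; have := Nat.dvd_add hd (dvd_refl j); rwa [Nat.sub_add_cancel hm] at this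
    have hm0 : m ≠ 0 := by omega
    by_cases hd : j ∣ m
    · have hq : m / j = (m - j)/j + 1 := by
        rcases hd with ⟨c, rfl⟩
        rw [Nat.mul_div_cancel_left _ hj]
        have h2 : j * c - j = j * (c - 1) := by
          cases c with
          | zero => omega
          | succ c' => simp [Nat.mul_succ]
        rw [h2, Nat.mul_div_cancel_left _ hj]
        have hc : 0 < c := by
          rcases Nat.eq_zero_or_pos c with rfl | hcc
          · exfalso; apply hm0; simp
          · exact hcc
        omega
      rw [if_pos hd, if_pos (hdv.mp hd), if_neg hm0, hq, pow_succ]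
      ring
    · rw [if_neg hd, if_neg (fun hh => hd (hdv.mpr hh)), if_neg hm0]; ring

/-- coefficients agree below K -/
def EqUpTo (K : ℕ) (f f' : S⟦X⟧) : Prop := ∀ m, m < K → (coeff (R := S) m) f = (coeff (R := S) m) f'

lemma EqUpTo.refl {K : ℕ} (f : S⟦X⟧) : EqUpTo K f f := fun _ _ => rfl

lemma EqUpTo.trans {K : ℕ} {f f' f'' : S⟦X⟧} (h1 : EqUpTo K f f') (h2 : EqUpTo K f' f'') :
    EqUpTo K f f'' := fun m hm => (h1 m hm).trans (h2 m hm)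

lemma EqUpTo.symm {K : ℕ} {f f' : S⟦X⟧} (h1 : EqUpTo K f f') : EqUpTo K f' f :=
  fun m hm => (h1 m hm).symm

lemma EqUpTo.mul {K : ℕ} {f f' u u' : S⟦X⟧} (h1 : EqUpTo K f f') (h2 : EqUpTo K u u') :
    EqUpTo K (f * u) (f' * u') := by
  intro m hm
  rw [PowerSeries.coeff_mul, PowerSeries.coeff_mul]
  apply Finset.sum_congr rfl
  intro p hp
  rw [Finset.HasAntidiagonal.mem_antidiagonal] at hp
  have hp1 : p.1 < K := by omega
  have hp2 : p.2 < K := by omega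
  rw [h1 p.1 hp1, h2 p.2 hp2]

lemma EqUpTo.mono {K K' : ℕ} {f f' : S⟦X⟧} (h1 : EqUpTo K f f') (hK : K' ≤ K) :
    EqUpTo K' f f' := fun m hm => h1 m (lt_of_lt_of_le hm hK)

lemma eqUpTo_one_of_one_sub_X_pow {K e : ℕ} (he : K ≤ e) : EqUpTo K (1 - X^e : S⟦X⟧) 1 := by
  intro m hm
  rw [map_sub, PowerSeries.coeff_X_pow]
  have : ¬ (m = e) := by omega
  simp [this]

lemma EqUpTo.prod {K : ℕ} {ι : Type*} (t : Finset ι) (F : ι → S⟦X⟧)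
    (hF : ∀ i ∈ t, EqUpTo K (F i) 1) : EqUpTo K (∏ i ∈ t, F i) 1 := by
  classical
  induction t using Finset.induction_on with
  | empty => simpa using EqUpTo.refl (S := S) 1
  | @insert a s hx ih =>
      rw [Finset.prod_insert hx]
      have h1 := hF a (Finset.mem_insert_self a s)
      have h2 := ih (fun i hi => hF i (Finset.mem_insert_of_mem hi))
      simpa using h1.mul h2

abbrev R := ZMod 3

lemma three_eq_zero : (3 : R⟦X⟧) = 0 := by
  have h1 : ((3:ℕ) : R⟦X⟧) = PowerSeries.C (R := R) ((3:ℕ) : R) := (map_natCast (PowerSeries.C (R := R)) 3).symm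
  have h2 : ((3:ℕ) : R) = 0 := by decide
  rw [h2, map_zero] at h1
  exact_mod_cast h1

lemma cube_add (a b : R⟦X⟧) : (a + b)^3 = a^3 + b^3 := by
  have h3 : (3 : R⟦X⟧) = 0 := three_eq_zero
  linear_combination (a^2*b + a*b^2) * h3

/-- Frobenius coefficient formula in char 3 -/
lemma coeff_cube (f : R⟦X⟧) (m : ℕ) :
    (coeff (R := R) m) (f^3) = if 3 ∣ m then (coeff (R := R) (m/3)) f else 0 := by
  classical
  set M := m + 1 with hM
  set T : Polynomial R := trunc M f with hT
  set t : R⟦X⟧ := PowerSeries.mk (fun i => (coeff (R := R) (M + i)) f) with ht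
  have hdecomp : f = (T : R⟦X⟧) + X^M * t := by
    ext i
    rw [map_add, Polynomial.coeff_coe, coeff_trunc, PowerSeries.coeff_X_pow_mul']
    rcases lt_or_ge i M with hi | hi
    · simp [hi, Nat.not_le.mpr hi]
    · have : ¬ i < M := by omega
      simp only [this, if_false, if_pos hi, zero_add, ht, coeff_mk]
      have heq : M + (i - M) = i := by omega
      rw [heq]
  have hcube : f^3 = (T : R⟦X⟧)^3 + (X^M * t)^3 := by
    rw [hdecomp, cube_add]
  have hTexp : (T : R⟦X⟧)^3 = ((Polynomial.expand R 3 T : Polynomial R) : R⟦X⟧) := by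
    have h1 : Polynomial.map (frobenius R 3) (Polynomial.expand R 3 T) = T ^ 3 :=
      Polynomial.map_frobenius_expand (p := 3) T
    rw [ZMod.frobenius_zmod, Polynomial.map_id] at h1
    rw [← Polynomial.coe_pow, ← h1]
  have hhigh : (coeff (R := R) m) ((X^M * t)^3) = 0 := by
    rw [mul_pow, ← pow_mul, PowerSeries.coeff_X_pow_mul']
    have : ¬ M * 3 ≤ m := by omega
    simp [this]
  rw [hcube, map_add, hhigh, add_zero, hTexp, Polynomial.coeff_coe,
    Polynomial.coeff_expand (by norm_num : 0 < 3)]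
  by_cases hd : 3 ∣ m
  · rw [if_pos hd, if_pos hd, coeff_trunc]
    have : m / 3 < M := by omega
    rw [if_pos this]
  · rw [if_neg hd, if_neg hd]
def sq (b : ℕ) : ℕ := if b = 0 then 1 else if Nat.sqrt b * Nat.sqrt b = b then 2 else 0

lemma isSquare_iff_sqrt (b : ℕ) : IsSquare b ↔ Nat.sqrt b * Nat.sqrt b = b := by
  rw [← Nat.exists_mul_self b]
  constructor
  · rintro ⟨r, hr⟩; exact ⟨r, hr.symm⟩
  · rintro ⟨r, hr⟩; exact ⟨r, hr.symm⟩

lemma sq_of_not_square {b : ℕ} (hb : ¬ IsSquare b) : sq b = 0 := by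
  have h0 : b ≠ 0 := by rintro rfl; exact hb ⟨0, rfl⟩
  rw [sq, if_neg h0, if_neg (fun hh => hb ((isSquare_iff_sqrt b).mpr hh))]

lemma sq_square (r : ℕ) : sq (r * r) = if r = 0 then 1 else 2 := by
  rcases Nat.eq_zero_or_pos r with rfl | hr
  · simp [sq]
  · have h0 : r * r ≠ 0 := by positivity
    have hs : Nat.sqrt (r*r) * Nat.sqrt (r*r) = r*r := by
      rw [Nat.sqrt_eq r]
    rw [sq, if_neg h0, if_pos hs, if_neg (by omega)]

lemma filter_sq_card (n b : ℕ) (hb : b ≤ n) :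
    ((Finset.Icc (-(n:ℤ)) n).filter (fun x => x^2 = (b:ℤ))).card = sq b := by
  by_cases hsq : IsSquare b
  · obtain ⟨r, hr⟩ := hsq
    have hrn : r ≤ n := by nlinarith [hr ▸ hb]
    have hmem : ∀ x : ℤ, x^2 = (b:ℤ) ↔ x = r ∨ x = -(r:ℤ) := by
      intro x
      constructor
      · intro hx
        have h1 : (x - r) * (x + r) = 0 := by
          have : (r:ℤ)*r = b := by exact_mod_cast hr.symm
          nlinarith [hx]
        rcases mul_eq_zero.mp h1 with h | h
        · left; omega
        · right; omega
      · rintro (rfl | rfl) <;> push_cast [hr] <;> ring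
    rcases Nat.eq_zero_or_pos r with rfl | hr0
    · have hb0 : b = 0 := by simpa using hr
      subst hb0
      have hset : ((Finset.Icc (-(n:ℤ)) n).filter (fun x => x^2 = ((0:ℕ):ℤ)))
          = ({0} : Finset ℤ) := by
        ext x
        simp only [Finset.mem_singleton, Finset.mem_filter, Finset.mem_Icc]
        constructor
        · rintro ⟨_, hx⟩
          have := (hmem x).mp hx
          simpa using this
        · rintro rfl
          refine ⟨⟨by omega, by omega⟩, by simp⟩
      rw [hset, Finset.card_singleton]
      simp [sq]
    · have hset : ((Finset.Icc (-(n:ℤ)) n).filter (fun x => x^2 = (b:ℤ)))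
          = {(r:ℤ), -(r:ℤ)} := by
        ext x
        simp only [Finset.mem_insert, Finset.mem_singleton, Finset.mem_filter, Finset.mem_Icc, hmem]
        constructor
        · rintro ⟨_, hx⟩; exact hx
        · rintro (rfl | rfl) <;>
            refine ⟨⟨by push_cast; omega, by push_cast; omega⟩, by tauto⟩
      rw [hset, hr, sq_square]
      rw [if_neg (by omega)]
      rw [Finset.card_insert_of_notMem (by simp; omega), Finset.card_singleton]
  · rw [sq_of_not_square hsq]
    rw [Finset.card_eq_zero]
    ext x
    simp only [Finset.mem_filter, Finset.notMem_empty, iff_false, not_and]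
    intro _ hx
    exact absurd ⟨x.natAbs, by
      have h1 : (x.natAbs : ℤ) * x.natAbs = x * x := Int.natAbs_mul_self' x
      have hx2 : (x.natAbs : ℤ) * x.natAbs = (b:ℤ) := by rw [h1]; nlinarith [hx]
      exact_mod_cast hx2.symm⟩ hsq

lemma r2_eq (n : ℕ) : r2 n = ∑ a ∈ Finset.range (n+1), sq a * sq (n - a) := by
  classical
  set T : Finset (ℤ × ℤ) := ((Finset.Icc (-(n:ℤ)) n) ×ˢ (Finset.Icc (-(n:ℤ)) n)).filter
      (fun p => p.1^2 + p.2^2 = (n:ℤ)) with hTdef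
  have hbound : ∀ x y : ℤ, x^2 + y^2 = (n:ℤ) → -(n:ℤ) ≤ x ∧ x ≤ n := by
    intro x y hxy
    constructor
    · nlinarith [sq_nonneg y, sq_nonneg (x+1), sq_nonneg x]
    · nlinarith [sq_nonneg y, sq_nonneg (x-1), sq_nonneg x]
  have hset : {p : ℤ × ℤ | p.1 ^ 2 + p.2 ^ 2 = (n : ℤ)} = (T : Set (ℤ × ℤ)) := by
    ext ⟨x, y⟩
    simp only [Set.mem_setOf_eq, hTdef, Finset.coe_filter, Finset.mem_product, Finset.mem_Icc,
      Set.mem_setOf_eq, Finset.mem_coe]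
    constructor
    · intro hxy
      have h1 := hbound x y hxy
      have h2 := hbound y x (by linarith)
      exact ⟨⟨h1, h2⟩, hxy⟩
    · exact fun h => h.2
  have hr2 : r2 n = T.card := by rw [r2, hset, Set.ncard_coe_finset]
  rw [hr2]
  rw [Finset.card_eq_sum_card_fiberwise (f := fun p => (p.1^2).toNat) (t := Finset.range (n+1))
    (by
      intro p hp
      simp only [Finset.mem_coe, hTdef, Finset.mem_filter] at hp
      have h2 := hp.2
      have : p.1^2 ≤ (n:ℤ) := by nlinarith [sq_nonneg p.2]
      simp only [Finset.mem_coe, Finset.mem_range]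
      omega)]
  apply Finset.sum_congr rfl
  intro a ha
  have han : a ≤ n := by simp only [Finset.mem_range] at ha; omega
  have hfib : (T.filter fun p => (p.1^2).toNat = a)
      = ((Finset.Icc (-(n:ℤ)) n).filter (fun x => x^2 = (a:ℤ))) ×ˢ
        ((Finset.Icc (-(n:ℤ)) n).filter (fun y => y^2 = ((n - a : ℕ):ℤ))) := by
    ext ⟨x, y⟩
    simp only [hTdef, Finset.mem_filter, Finset.mem_product, Finset.mem_Icc]
    constructor
    · rintro ⟨⟨⟨hx, hy⟩, hsum⟩, hxa⟩
      have hx2 : x^2 = (a:ℤ) := by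
        have : (0:ℤ) ≤ x^2 := sq_nonneg x
        omega
      refine ⟨⟨hx, hx2⟩, hy, ?_⟩
      push_cast [Nat.cast_sub han]
      omega
    · rintro ⟨⟨hx, hx2⟩, hy, hy2⟩
      have hcast : ((n - a : ℕ):ℤ) = (n:ℤ) - a := by push_cast [Nat.cast_sub han]; ring
      refine ⟨⟨⟨hx, hy⟩, by rw [hx2, hy2, hcast]; ring⟩, by omega⟩
  rw [hfib, Finset.card_product, filter_sq_card n a han, filter_sq_card n (n-a) (by omega)]

noncomputable def c (a : ℕ) : R := (-1)^a * (sq a : R)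

noncomputable def θ : R⟦X⟧ := PowerSeries.mk c

lemma coeff_theta (a : ℕ) : (coeff (R := R) a) θ = c a := by simp [θ]

lemma constantCoeff_theta : constantCoeff (R := R) θ = 1 := by
  have : (coeff (R := R) 0) θ = c 0 := coeff_theta 0
  rw [PowerSeries.coeff_zero_eq_constantCoeff] at this
  rw [this]; simp [c, sq]

lemma coeff_theta_sq (n : ℕ) : (coeff (R := R) n) (θ^2) = (-1)^n * (r2 n : R) := by
  rw [pow_two, PowerSeries.coeff_mul, Finset.Nat.sum_antidiagonal_eq_sum_range_succ_mk]
  have : ∀ a ∈ Finset.range (n+1), (coeff (R := R) a) θ * (coeff (R := R) (n-a)) θ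
      = (-1)^n * ((sq a * sq (n-a) : ℕ) : R) := by
    intro a ha
    simp only [Finset.mem_range] at ha
    rw [coeff_theta, coeff_theta, c, c]
    have hpow : ((-1:R))^a * ((-1:R))^(n-a) = (-1)^n := by
      rw [← pow_add]
      congr 1
      omega
    push_cast
    calc (-1:R)^a * (sq a : R) * ((-1)^(n-a) * (sq (n-a) : R))
        = ((-1:R)^a * (-1)^(n-a)) * ((sq a : R) * (sq (n-a) : R)) := by ring
      _ = (-1)^n * ((sq a : R) * (sq (n-a) : R)) := by rw [hpow]
  rw [Finset.sum_congr rfl this, ← Finset.mul_sum]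
  congr 1
  rw [r2_eq]
  push_cast
  rfl


noncomputable def Pq (k : ℕ) : R⟦X⟧ := ∏ j ∈ Finset.range k, (1 - X^(2*j+2))
noncomputable def Pg (k : ℕ) : R⟦X⟧ := ∏ j ∈ Finset.range k, g (2*j+2)

lemma Pq_mul_Pg (k : ℕ) : Pq k * Pg k = 1 := by
  rw [Pq, Pg, ← Finset.prod_mul_distrib]
  apply Finset.prod_eq_one
  intro j _
  exact one_sub_mul_g (2*j+2) (by omega)

lemma Pq_succ (k : ℕ) : Pq (k+1) = Pq k * (1 - X^(2*k+2)) := Finset.prod_range_succ _ k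

lemma constantCoeff_Pq (k : ℕ) : constantCoeff (R := R) (Pq k) = 1 := by
  rw [Pq, map_prod]
  apply Finset.prod_eq_one
  intro j _
  rw [map_sub, map_one, ← PowerSeries.coeff_zero_eq_constantCoeff, PowerSeries.coeff_X_pow]
  simp

lemma Pq_ne_zero (k : ℕ) : Pq k ≠ 0 := by
  intro hf
  have := constantCoeff_Pq k
  rw [hf, map_zero] at this
  exact one_ne_zero this.symm

noncomputable def B (a b : ℕ) : R⟦X⟧ := if b ≤ a then Pq a * Pg b * Pg (a - b) else 0

lemma B_of_lt {a b : ℕ} (hab : a < b) : B a b = 0 := by rw [B, if_neg (by omega)]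

lemma B_zero_right (a : ℕ) : B a 0 = 1 := by
  rw [B, if_pos (by omega)]
  have : Pg 0 = 1 := by rw [Pg]; simp
  rw [this, Nat.sub_zero, mul_one, Pq_mul_Pg]

lemma B_mul_denom {a b : ℕ} (hab : b ≤ a) : B a b * (Pq b * Pq (a-b)) = Pq a := by
  rw [B, if_pos hab]
  have h1 : Pg b * Pq b = 1 := by rw [mul_comm]; exact Pq_mul_Pg b
  have h2 : Pg (a-b) * Pq (a-b) = 1 := by rw [mul_comm]; exact Pq_mul_Pg (a-b)
  calc Pq a * Pg b * Pg (a-b) * (Pq b * Pq (a-b))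
      = Pq a * (Pg b * Pq b) * (Pg (a-b) * Pq (a-b)) := by ring
    _ = Pq a := by rw [h1, h2]; ring

/-- distance-squared exponent -/
def e (a b : ℕ) : ℕ := ((a - b) + (b - a))^2

lemma e_eq {a b d : ℕ} (hd : (a - b) + (b - a) = d) : e a b = d^2 := by rw [e, hd]

lemma hTL (m s : ℕ) (hs : s ≤ 2*m+2) :
    B (2*m+2) s * (Pq s * Pq (2*m+2-s)) = Pq (2*m) * ((1-X^(4*m+2))*(1-X^(4*m+4))) := by
  rw [B_mul_denom hs]
  have h1 : 2*m+2 = (2*m+1)+1 := by omega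
  rw [h1, Pq_succ, Pq_succ]
  ring

lemma hT0 (m s : ℕ) (hs : s ≤ 2*m+2) :
    B (2*m) s * (Pq s * Pq (2*m+2-s))
      = Pq (2*m) * ((1-X^(2*(2*m+1-s)))*(1-X^(2*(2*m+2-s)))) := by
  by_cases hs2 : s ≤ 2*m
  · have hd := B_mul_denom (a := 2*m) (b := s) hs2
    have h1 : 2*m+2-s = (2*m-s)+1+1 := by omega
    have h2 : 2*(2*m+1-s) = 2*(2*m-s)+2 := by omega
    have h3 : 2*(2*m+2-s) = 2*((2*m-s)+1)+2 := by omega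
    rw [h2, h3, h1, Pq_succ, Pq_succ]
    linear_combination ((1 - X^(2*(2*m-s)+2))*(1 - X^(2*((2*m-s)+1)+2))) * hd
  · rw [B_of_lt (by omega), show 2*(2*m+1-s) = 0 from by omega, pow_zero]
    ring

lemma hT1 (m s : ℕ) (hs1 : 1 ≤ s) (hs : s ≤ 2*m+2) :
    B (2*m) (s-1) * (Pq s * Pq (2*m+2-s))
      = Pq (2*m) * ((1-X^(2*s))*(1-X^(2*(2*m+2-s)))) := by
  obtain ⟨s', rfl⟩ : ∃ s', s = s'+1 := ⟨s-1, by omega⟩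
  simp only [Nat.add_sub_cancel]
  by_cases hs2 : s' ≤ 2*m
  · have hd := B_mul_denom (a := 2*m) (b := s') hs2
    have h1 : 2*m+2-(s'+1) = (2*m-s')+1 := by omega
    have h2 : 2*(2*m+2-(s'+1)) = 2*(2*m-s')+2 := by omega
    rw [h2, h1, Pq_succ, Pq_succ]
    linear_combination ((1 - X^(2*s'+2))*(1 - X^(2*(2*m-s')+2))) * hd
  · rw [B_of_lt (by omega), show 2*(2*m+2-(s'+1)) = 0 from by omega, pow_zero]
    ring

lemma hT2 (m s : ℕ) (hs1 : 2 ≤ s) (hs : s ≤ 2*m+2) :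
    B (2*m) (s-2) * (Pq s * Pq (2*m+2-s))
      = Pq (2*m) * ((1-X^(2*s))*(1-X^(2*s-2))) := by
  obtain ⟨s', rfl⟩ : ∃ s', s = s'+2 := ⟨s-2, by omega⟩
  simp only [Nat.add_sub_cancel]
  have hs2 : s' ≤ 2*m := by omega
  have hd := B_mul_denom (a := 2*m) (b := s') hs2
  have h1 : s'+2 = (s'+1)+1 := by omega
  have h2 : 2*m+2-(s'+2) = 2*m-s' := by omega
  have h3 : 2*(s'+2)-2 = 2*s'+2 := by omega
  rw [h3, h2, h1, Pq_succ, Pq_succ]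
  linear_combination ((1 - X^(2*s'+2))*(1 - X^(2*(s'+1)+2))) * hd

lemma keyM (m s : ℕ) (hs1 : 1 ≤ s) (hs : s ≤ 2*m+2) :
    (X^(e (m+1) s) * ((1-X^(4*m+2))*(1-X^(4*m+4))) : R⟦X⟧)
      = X^(2*m+1) * X^(e m s) * ((1-X^(2*(2*m+1-s)))*(1-X^(2*(2*m+2-s))))
        + (1+X^(4*m+2)) * X^(e m (s-1)) * ((1-X^(2*s))*(1-X^(2*(2*m+2-s))))
        + (if 2 ≤ s then X^(2*m+1) * X^(e m (s-2)) * ((1-X^(2*s))*(1-X^(2*s-2))) else 0) := by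
  by_cases hs2 : 2 ≤ s
  · rw [if_pos hs2]
    by_cases hA : s ≤ m
    · obtain ⟨v, rfl⟩ : ∃ v, s = v+2 := ⟨s-2, by omega⟩
      obtain ⟨u, rfl⟩ : ∃ u, m = v+2+u := ⟨m-(v+2), by omega⟩
      rw [e_eq (show ((v+2+u+1) - (v+2))+((v+2) - (v+2+u+1)) = u+1 by omega),
          e_eq (show ((v+2+u) - (v+2))+((v+2) - (v+2+u)) = u by omega),
          e_eq (show ((v+2+u) - (v+2-1))+((v+2-1) - (v+2+u)) = u+1 by omega),
          e_eq (show ((v+2+u) - (v+2-2))+((v+2-2) - (v+2+u)) = u+2 by omega),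
          show 2*(2*(v+2+u)+1-(v+2)) = 2*v+4*u+6 by omega,
          show 2*(2*(v+2+u)+2-(v+2)) = 2*v+4*u+8 by omega,
          show 2*(v+2)-2 = 2*v+2 by omega]
      ring
    · by_cases hB : s = m+1
      · subst hB
        obtain ⟨w, rfl⟩ : ∃ w, m = w+1 := ⟨m-1, by omega⟩
        rw [e_eq (show ((w+1+1) - (w+1+1))+((w+1+1) - (w+1+1)) = 0 by omega),
            e_eq (show ((w+1) - (w+1+1))+((w+1+1) - (w+1)) = 1 by omega),
            e_eq (show ((w+1) - (w+1+1-1))+((w+1+1-1) - (w+1)) = 0 by omega),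
            e_eq (show ((w+1) - (w+1+1-2))+((w+1+1-2) - (w+1)) = 1 by omega),
            show 2*(2*(w+1)+1-(w+1+1)) = 2*w+2 by omega,
            show 2*(2*(w+1)+2-(w+1+1)) = 2*w+4 by omega,
            show 2*(w+1+1)-2 = 2*w+2 by omega]
        ring
      · by_cases hD : s = 2*m+1
        · subst hD
          obtain ⟨w, rfl⟩ : ∃ w, m = w+1 := ⟨m-1, by omega⟩
          rw [e_eq (show ((w+1+1) - (2*(w+1)+1))+((2*(w+1)+1) - (w+1+1)) = w+1 by omega),
              e_eq (show ((w+1) - (2*(w+1)+1))+((2*(w+1)+1) - (w+1)) = w+2 by omega),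
              e_eq (show ((w+1) - (2*(w+1)+1-1))+((2*(w+1)+1-1) - (w+1)) = w+1 by omega),
              e_eq (show ((w+1) - (2*(w+1)+1-2))+((2*(w+1)+1-2) - (w+1)) = w by omega),
              show 2*(2*(w+1)+1-(2*(w+1)+1)) = 0 by omega,
              show 2*(2*(w+1)+2-(2*(w+1)+1)) = 2 by omega,
              show 2*(2*(w+1)+1)-2 = 4*w+4 by omega]
          ring
        · by_cases hE : s = 2*m+2
          · subst hE
            rw [e_eq (show ((m+1) - (2*m+2))+((2*m+2) - (m+1)) = m+1 by omega),
                e_eq (show (m - (2*m+2))+((2*m+2) - m) = m+2 by omega),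
                e_eq (show (m - (2*m+2-1))+((2*m+2-1) - m) = m+1 by omega),
                e_eq (show (m - (2*m+2-2))+((2*m+2-2) - m) = m by omega),
                show 2*(2*m+1-(2*m+2)) = 0 by omega,
                show 2*(2*m+2-(2*m+2)) = 0 by omega,
                show 2*(2*m+2)-2 = 4*m+2 by omega]
            ring
          · -- m+2 ≤ s ≤ 2m
            obtain ⟨t, rfl⟩ : ∃ t, s = m+t+2 := ⟨s-m-2, by omega⟩
            obtain ⟨w, rfl⟩ : ∃ w, m = t+2+w := ⟨m-(t+2), by omega⟩
            rw [e_eq (show ((t+2+w+1) - (t+2+w+t+2))+((t+2+w+t+2) - (t+2+w+1)) = t+1 by omega),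
                e_eq (show ((t+2+w) - (t+2+w+t+2))+((t+2+w+t+2) - (t+2+w)) = t+2 by omega),
                e_eq (show ((t+2+w) - (t+2+w+t+2-1))+((t+2+w+t+2-1) - (t+2+w)) = t+1 by omega),
                e_eq (show ((t+2+w) - (t+2+w+t+2-2))+((t+2+w+t+2-2) - (t+2+w)) = t by omega),
                show 2*(2*(t+2+w)+1-(t+2+w+t+2)) = 2*w+2 by omega,
                show 2*(2*(t+2+w)+2-(t+2+w+t+2)) = 2*w+4 by omega,
                show 2*(t+2+w+t+2)-2 = 4*t+2*w+6 by omega]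
            ring
  · have hseq : s = 1 := by omega
    subst hseq
    rw [if_neg hs2]
    rcases Nat.eq_zero_or_pos m with rfl | hm
    · rw [e_eq (show ((0+1) - 1)+(1 - (0+1)) = 0 by omega),
          e_eq (show (0 - 1)+(1 - 0) = 1 by omega),
          e_eq (show (0 - (1-1))+((1-1) - 0) = 0 by omega),
          show 2*(2*0+1-1) = 0 by omega,
          show 2*(2*0+2-1) = 2 by omega]
      ring
    · obtain ⟨w, rfl⟩ : ∃ w, m = w+1 := ⟨m-1, by omega⟩
      rw [e_eq (show ((w+1+1) - 1)+(1 - (w+1+1)) = w+1 by omega),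
          e_eq (show ((w+1) - 1)+(1 - (w+1)) = w by omega),
          e_eq (show ((w+1) - (1-1))+((1-1) - (w+1)) = w+1 by omega),
          show 2*(2*(w+1)+1-1) = 4*w+4 by omega,
          show 2*(2*(w+1)+2-1) = 4*w+6 by omega]
      ring

lemma key (m s : ℕ) :
    (X^(e (m+1) s) * B (2*m+2) s : R⟦X⟧)
      = X^(2*m+1) * (X^(e m s) * B (2*m) s)
        + (if 1 ≤ s then (1 + X^(4*m+2)) * (X^(e m (s-1)) * B (2*m) (s-1)) else 0)
        + (if 2 ≤ s then X^(2*m+1) * (X^(e m (s-2)) * B (2*m) (s-2)) else 0) := by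
  by_cases hs0 : s = 0
  · subst hs0
    rw [if_neg (by omega), if_neg (by omega), B_zero_right, B_zero_right,
        e_eq (show ((m+1) - 0)+(0 - (m+1)) = m+1 by omega),
        e_eq (show (m - 0)+(0 - m) = m by omega)]
    ring
  by_cases hbig : 2*m+2 < s
  · rw [B_of_lt (by omega : 2*m+2 < s), B_of_lt (by omega : 2*m < s),
        B_of_lt (by omega : 2*m < s-1), B_of_lt (by omega : 2*m < s-2),
        if_pos (by omega : 1 ≤ s), if_pos (by omega : 2 ≤ s)]
    ring
  have hs1 : 1 ≤ s := by omega
  have hs : s ≤ 2*m+2 := by omega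
  have hV : Pq s * Pq (2*m+2-s) ≠ 0 := mul_ne_zero (Pq_ne_zero _) (Pq_ne_zero _)
  have hm := keyM m s hs1 hs
  have htl := hTL m s hs
  have ht0 := hT0 m s hs
  have ht1 := hT1 m s hs1 hs
  rw [if_pos hs1]
  by_cases hs2 : 2 ≤ s
  · rw [if_pos hs2] at hm ⊢
    have ht2 := hT2 m s hs2 hs
    apply mul_right_cancel₀ hV
    linear_combination X^(e (m+1) s) * htl - (X^(2*m+1) * X^(e m s)) * ht0
      - ((1+X^(4*m+2)) * X^(e m (s-1))) * ht1 - (X^(2*m+1) * X^(e m (s-2))) * ht2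
      + Pq (2*m) * hm
  · rw [if_neg hs2] at hm ⊢
    apply mul_right_cancel₀ hV
    linear_combination X^(e (m+1) s) * htl - (X^(2*m+1) * X^(e m s)) * ht0
      - ((1+X^(4*m+2)) * X^(e m (s-1))) * ht1 + Pq (2*m) * hm

noncomputable def G (m : ℕ) : Polynomial (R⟦X⟧) :=
  ∏ j ∈ Finset.range m,
    ((1 + Polynomial.C (X^(2*j+1)) * Polynomial.X) * (Polynomial.X + Polynomial.C (X^(2*j+1))))

lemma coeff_G (m : ℕ) : ∀ s, (G m).coeff s = X^(e m s) * B (2*m) s := by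
  induction m with
  | zero =>
      intro s
      have hG : G 0 = 1 := by rw [G]; simp
      rw [hG]
      rcases Nat.eq_zero_or_pos s with rfl | hs
      · rw [Polynomial.coeff_one]
        rw [e_eq (show (0 - 0)+(0 - 0) = 0 by omega), B_zero_right]
        simp
      · rw [Polynomial.coeff_one, B_of_lt (by omega : 2*0 < s), if_neg (by omega)]
        ring
  | succ m ih =>
      intro s
      have hC : Polynomial.C (1 + (X^(4*m+2) : R⟦X⟧))
          = 1 + Polynomial.C (X^(2*m+1) : R⟦X⟧) * Polynomial.C (X^(2*m+1) : R⟦X⟧) := by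
        have hXX : (X^(2*m+1) : R⟦X⟧) * X^(2*m+1) = X^(4*m+2) := by
          rw [← pow_add]; congr 1; omega
        rw [← hXX, map_add, map_one, map_mul]
      have hexp : G (m+1) = G m * Polynomial.C (X^(2*m+1) : R⟦X⟧)
          + (G m * Polynomial.C (1 + (X^(4*m+2) : R⟦X⟧))) * Polynomial.X^1
          + (G m * Polynomial.C (X^(2*m+1) : R⟦X⟧)) * Polynomial.X^2 := by
        rw [G, Finset.prod_range_succ, ← G, hC]
        ring
      have h2m : 2*(m+1) = 2*m+2 := by omega
      rw [h2m, hexp, Polynomial.coeff_add, Polynomial.coeff_add, Polynomial.coeff_mul_C,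
          Polynomial.coeff_mul_X_pow', Polynomial.coeff_mul_X_pow', Polynomial.coeff_mul_C,
          Polynomial.coeff_mul_C, ih s, ih (s-1), ih (s-2)]
      have hkey := key m s
      by_cases hs1 : 1 ≤ s
      · by_cases hs2 : 2 ≤ s
        · rw [if_pos hs1, if_pos hs2] at hkey
          rw [if_pos (by omega : 1 ≤ s), if_pos (by omega : 2 ≤ s)]
          linear_combination -hkey
        · rw [if_pos hs1, if_neg hs2] at hkey
          rw [if_pos (by omega : 1 ≤ s), if_neg (by omega : ¬ 2 ≤ s)]
          linear_combination -hkey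
      · rw [if_neg hs1, if_neg (by omega : ¬ 2 ≤ s)] at hkey
        rw [if_neg (by omega : ¬ 1 ≤ s), if_neg (by omega : ¬ 2 ≤ s)]
        linear_combination -hkey

lemma natDegree_G (m : ℕ) : (G m).natDegree ≤ 2*m := by
  rw [Polynomial.natDegree_le_iff_coeff_eq_zero]
  intro N hN
  rw [coeff_G, B_of_lt (by omega), mul_zero]

noncomputable def Podd (m : ℕ) : R⟦X⟧ := ∏ j ∈ Finset.range m, (1 - X^(2*j+1))

lemma evalG (m : ℕ) : Polynomial.eval (-1 : R⟦X⟧) (G m) = (-1)^m * (Podd m)^2 := by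
  rw [G, Polynomial.eval_prod]
  have hfac : ∀ j ∈ Finset.range m,
      Polynomial.eval (-1 : R⟦X⟧)
        ((1 + Polynomial.C (X^(2*j+1)) * Polynomial.X) * (Polynomial.X + Polynomial.C (X^(2*j+1))))
      = (-1) * (1 - X^(2*j+1))^2 := by
    intro j _
    simp only [Polynomial.eval_mul, Polynomial.eval_add, Polynomial.eval_one, Polynomial.eval_C,
      Polynomial.eval_X]
    ring
  rw [Finset.prod_congr rfl hfac, Finset.prod_mul_distrib, Finset.prod_const,
    Finset.card_range, Podd, Finset.prod_pow]

lemma jtp (m : ℕ) :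
    ((-1 : R⟦X⟧)^m) * (Podd m)^2
      = ∑ s ∈ Finset.range (2*m+1), X^(e m s) * B (2*m) s * (-1 : R⟦X⟧)^s := by
  rw [← evalG]
  rw [Polynomial.eval_eq_sum_range' (n := 2*m+1) (by have := natDegree_G m; omega)]
  apply Finset.sum_congr rfl
  intro s _
  rw [coeff_G]

/-- partial theta-product -/
noncomputable def Θ (m : ℕ) : R⟦X⟧ := (Podd m)^2 * Pq m

lemma theta_expand (m : ℕ) :
    Θ m = ∑ s ∈ Finset.range (2*m+1),
      (PowerSeries.C (R := R) ((-1)^(m+s)) * (X^(e m s) * (B (2*m) s * Pq m))) := by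
  have h1 := jtp m
  have hsq : ((-1 : R⟦X⟧)^m) * ((-1 : R⟦X⟧)^m) = 1 := by
    rw [← pow_add]
    exact Even.neg_one_pow ⟨m, by omega⟩
  have h2 : Θ m = ((-1 : R⟦X⟧)^m) * (((-1 : R⟦X⟧)^m) * (Podd m)^2) * Pq m := by
    rw [← mul_assoc, hsq]
    rw [Θ]
    ring
  rw [h2, h1, Finset.mul_sum, Finset.sum_mul]
  apply Finset.sum_congr rfl
  intro s _
  have hC : (PowerSeries.C (R := R) ((-1)^(m+s))) = ((-1 : R⟦X⟧))^(m+s) := by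
    rw [map_pow, map_neg, map_one]
  rw [hC, pow_add]
  ring

noncomputable def Mid (a k : ℕ) : R⟦X⟧ := ∏ j ∈ Finset.range k, (1 - X^(2*(a+j)+2))

lemma Pq_split (a k : ℕ) : Pq (a+k) = Pq a * Mid a k := by
  rw [Pq, Finset.prod_range_add, ← Pq, Mid]

lemma Mid_eqUpTo (a k : ℕ) : EqUpTo (2*a+2) (Mid a k) 1 :=
  EqUpTo.prod _ _ (fun j _ => eqUpTo_one_of_one_sub_X_pow (by omega))

lemma BPq (m s : ℕ) (hs : s ≤ 2*m) :
    EqUpTo (2*(m - ((m-s)+(s-m)))+2) (B (2*m) s * Pq m) 1 := by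
  set d := (m-s)+(s-m) with hd
  set K := 2*(m-d)+2 with hK
  have hB : B (2*m) s = Pq (2*m) * Pg s * Pg (2*m-s) := by rw [B, if_pos hs]
  have h1 : Pq (2*m) * Pg s = Mid s (2*m - s) := by
    have hs2 := Pq_split s (2*m - s)
    rw [show s + (2*m - s) = 2*m by omega] at hs2
    rw [hs2]
    calc Pq s * Mid s (2*m-s) * Pg s = Mid s (2*m-s) * (Pq s * Pg s) := by ring
      _ = Mid s (2*m-s) := by rw [Pq_mul_Pg]; ring
  have hE1 : EqUpTo (2*s+2) (Pq (2*m) * Pg s) 1 := by rw [h1]; exact Mid_eqUpTo s _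
  have hE2 : EqUpTo K (Pg (2*m - s) * Pq m) 1 := by
    by_cases hsm : s ≤ m
    · have hsp := Pq_split m (m - s)
      rw [show m + (m-s) = 2*m - s by omega] at hsp
      have hMu : Mid m (m-s) * (Pg (2*m-s) * Pq m) = 1 := by
        calc Mid m (m-s) * (Pg (2*m-s) * Pq m)
            = Pg (2*m-s) * (Pq m * Mid m (m-s)) := by ring
          _ = Pg (2*m-s) * Pq (2*m-s) := by rw [← hsp]
          _ = 1 := by rw [mul_comm]; exact Pq_mul_Pg _
      have h3 : EqUpTo (2*m+2) (Mid m (m-s) * (Pg (2*m-s) * Pq m))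
          (1 * (Pg (2*m-s) * Pq m)) := (Mid_eqUpTo m _).mul (EqUpTo.refl _)
      rw [hMu, one_mul] at h3
      exact (h3.symm).mono (by omega)
    · have hsp := Pq_split (2*m-s) (s-m)
      rw [show (2*m-s) + (s-m) = m by omega] at hsp
      have hform : Pg (2*m-s) * Pq m = Mid (2*m-s) (s-m) := by
        rw [hsp]
        calc Pg (2*m-s) * (Pq (2*m-s) * Mid (2*m-s) (s-m))
            = (Pq (2*m-s) * Pg (2*m-s)) * Mid (2*m-s) (s-m) := by ring
          _ = Mid (2*m-s) (s-m) := by rw [Pq_mul_Pg]; ring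
      rw [hform]
      exact (Mid_eqUpTo _ _).mono (by omega)
  have hE1' : EqUpTo K (Pq (2*m) * Pg s) 1 := hE1.mono (by omega)
  have hcomb := hE1'.mul hE2
  have hform2 : B (2*m) s * Pq m = (Pq (2*m) * Pg s) * (Pg (2*m-s) * Pq m) := by
    rw [hB]; ring
  rw [hform2]
  simpa using hcomb

lemma coeff_term (m s r : ℕ) (hs : s ≤ 2*m) (hr : r ≤ 2*m) :
    (coeff (R := R) r) (X^(e m s) * (B (2*m) s * Pq m)) = if r = e m s then 1 else 0 := by
  set d := (m-s)+(s-m) with hd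
  have hBq := BPq m s hs
  have hed : e m s = d^2 := by rw [e, ← hd]
  have hdm : d ≤ m := by omega
  rw [PowerSeries.coeff_X_pow_mul']
  by_cases hle : e m s ≤ r
  · have hdd : d^2 = d*d := by ring
    have h2d : 2*d ≤ d*d + 1 := by nlinarith
    have hlt : r - e m s < 2*(m-d)+2 := by
      rw [hed]
      omega
    rw [if_pos hle, hBq _ hlt, PowerSeries.coeff_one]
    by_cases heq : r = e m s
    · rw [if_pos (by omega), if_pos heq]
    · rw [if_neg (by omega), if_neg heq]
  · rw [if_neg hle, if_neg (by omega)]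

lemma neg_one_pow_congr {a b : ℕ} (hab : a % 2 = b % 2) : ((-1 : R))^a = (-1)^b := by
  rw [← Nat.div_add_mod a 2, ← Nat.div_add_mod b 2, pow_add, pow_add, pow_mul, pow_mul]
  norm_num [hab]

lemma theta_sum (m r : ℕ) (hr : r ≤ 2*m) (hm : 2 ≤ m) :
    ∑ s ∈ Finset.range (2*m+1), (if r = e m s then ((-1:R)^(m+s)) else 0) = c r := by
  by_cases hsq : IsSquare r
  · obtain ⟨w, hw⟩ := hsq
    have hwm : w ≤ m := by nlinarith
    have hcond : ∀ s, r = e m s ↔ (s = m - w ∨ s = m + w) := by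
      intro s
      rw [e]
      constructor
      · intro hrs
        have hds : ((m-s)+(s-m))^2 = w^2 := by rw [← hrs, hw]; ring
        have : (m-s)+(s-m) = w := by
          nlinarith [hds, Nat.le_total ((m-s)+(s-m)) w]
        omega
      · intro hs
        have : (m-s)+(s-m) = w := by omega
        rw [this, hw]; ring
    rcases Nat.eq_zero_or_pos w with rfl | hw0
    · have hr0 : r = 0 := by omega
      subst hr0
      have hc : ∀ s ∈ Finset.range (2*m+1),
          (if (0:ℕ) = e m s then ((-1:R)^(m+s)) else 0)
          = if s = m then ((-1:R)^(m+s)) else 0 := by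
        intro s _
        by_cases hsm : s = m
        · rw [if_pos ((hcond s).mpr (by omega)), if_pos hsm]
        · rw [if_neg (fun hh => hsm (by have := (hcond s).mp hh; omega)), if_neg hsm]
      rw [Finset.sum_congr rfl hc, Finset.sum_ite_eq' (Finset.range (2*m+1)) m]
      rw [if_pos (by simp; omega)]
      have : c 0 = 1 := by simp [c, sq]
      rw [this, neg_one_pow_congr (show (m+m) % 2 = 0 % 2 by omega), pow_zero]
    · have hc : ∀ s ∈ Finset.range (2*m+1),
          (if r = e m s then ((-1:R)^(m+s)) else 0)
          = if s ∈ ({m - w, m + w} : Finset ℕ) then ((-1:R)^(m+s)) else 0 := by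
        intro s _
        by_cases hsm : s ∈ ({m - w, m + w} : Finset ℕ)
        · simp only [Finset.mem_insert, Finset.mem_singleton] at hsm
          rw [if_pos ((hcond s).mpr hsm), if_pos (by simp [hsm])]
        · simp only [Finset.mem_insert, Finset.mem_singleton] at hsm
          push_neg at hsm
          rw [if_neg (fun hh => by
            have := (hcond s).mp hh
            rcases this with h | h
            · exact hsm.1 h
            · exact hsm.2 h), if_neg (by simp [hsm.1, hsm.2])]
      rw [Finset.sum_congr rfl hc, Finset.sum_ite_mem]
      have hsub : Finset.range (2*m+1) ∩ ({m - w, m + w} : Finset ℕ) = {m - w, m + w} := by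
        apply Finset.inter_eq_right.mpr
        intro x hx
        simp only [Finset.mem_insert, Finset.mem_singleton] at hx
        simp only [Finset.mem_range]
        omega
      rw [hsub, Finset.sum_pair (by omega : m - w ≠ m + w)]
      have hc1 : ((-1:R))^(m+(m-w)) = (-1)^w := neg_one_pow_congr (by omega)
      have hc2 : ((-1:R))^(m+(m+w)) = (-1)^w := neg_one_pow_congr (by omega)
      rw [hc1, hc2]
      have hcr : c r = (-1)^w * 2 := by
        rw [c, hw, sq_square, if_neg (by omega)]
        have : ((-1:R))^(w*w) = (-1)^w := neg_one_pow_congr (by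
          rcases Nat.even_or_odd w with he | ho
          · obtain ⟨t, rfl⟩ := he
            have h2 : (t+t) * (t+t) = 2*(2*t*t) := by ring
            omega
          · obtain ⟨t, rfl⟩ := ho
            have : (2*t+1) * (2*t+1) = 2*(2*t*t+2*t)+1 := by ring
            omega)
        rw [this]
        push_cast
        ring
      rw [hcr]
      ring
  · have hc : ∀ s ∈ Finset.range (2*m+1),
        (if r = e m s then ((-1:R)^(m+s)) else 0) = 0 := by
      intro s _
      rw [if_neg (fun hh => hsq ⟨(m-s)+(s-m), by rw [hh, e]; ring⟩)]
    rw [Finset.sum_congr rfl hc, Finset.sum_const_zero]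
    rw [c, sq_of_not_square hsq]
    simp

lemma coeff_theta_partial (m r : ℕ) (hr : r ≤ 2*m) (hm : 2 ≤ m) :
    (coeff (R := R) r) (Θ m) = c r := by
  rw [theta_expand, map_sum]
  have hterm : ∀ s ∈ Finset.range (2*m+1),
      (coeff (R := R) r) (PowerSeries.C (R := R) ((-1)^(m+s)) * (X^(e m s) * (B (2*m) s * Pq m)))
      = (if r = e m s then ((-1:R)^(m+s)) else 0) := by
    intro s hsmem
    simp only [Finset.mem_range] at hsmem
    rw [PowerSeries.coeff_C_mul, coeff_term m s r (by omega) hr]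
    by_cases heq : r = e m s
    · rw [if_pos heq, if_pos heq, mul_one]
    · rw [if_neg heq, if_neg heq, mul_zero]
  rw [Finset.sum_congr rfl hterm, theta_sum m r hr hm]
noncomputable def Dp (N : ℕ) : R⟦X⟧ := ∏ k ∈ Finset.range N, ((1 - X^(k+1)) * h (k+1))

lemma prod_split (f : ℕ → R⟦X⟧) (m : ℕ) :
    ∏ k ∈ Finset.range (2*m), f k
      = (∏ j ∈ Finset.range m, f (2*j)) * ∏ j ∈ Finset.range m, f (2*j+1) := by
  induction m with
  | zero => simp
  | succ m ih =>
      rw [show 2*(m+1) = (2*m+1)+1 by omega, Finset.prod_range_succ, Finset.prod_range_succ,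
        ih, Finset.prod_range_succ, Finset.prod_range_succ]
      ring

lemma Dp_mul_Pq (m : ℕ) : Dp (2*m) * Pq (2*m) = (Podd m)^2 * (Pq m)^2 := by
  have h1 : Dp (2*m) * Pq (2*m) = ∏ k ∈ Finset.range (2*m), (1 - X^(k+1))^2 := by
    rw [Dp, Pq, ← Finset.prod_mul_distrib]
    apply Finset.prod_congr rfl
    intro k _
    have hfac : (1 - X^(2*k+2) : R⟦X⟧) = (1 - X^(k+1)) * (1 + X^(k+1)) := by ring
    rw [hfac]
    calc ((1 - X^(k+1)) * (h (k+1) : R⟦X⟧) * ((1 - X^(k+1)) * (1 + X^(k+1))) : R⟦X⟧)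
        = (1 - X^(k+1))^2 * ((1 + X^(k+1)) * (h (k+1) : R⟦X⟧)) := by ring
      _ = ((1 - X^(k+1))^2 : R⟦X⟧) := by rw [one_add_mul_h (k+1) (by omega)]; ring
  rw [h1, prod_split (fun k => (1 - X^(k+1))^2) m]
  have ha : ∏ j ∈ Finset.range m, ((1 - X^(2*j+1) : R⟦X⟧))^2 = (Podd m)^2 := by
    rw [Podd, Finset.prod_pow]
  have hb : ∏ j ∈ Finset.range m, ((1 - X^(2*j+1+1) : R⟦X⟧))^2 = (Pq m)^2 := by
    rw [Finset.prod_congr rfl (fun j _ => by rw [show 2*j+1+1 = 2*j+2 by omega]), Pq,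
      Finset.prod_pow]
  rw [ha, hb]

lemma Dp_mul_Mid (m : ℕ) : Dp (2*m) * Mid m m = Θ m := by
  apply mul_left_cancel₀ (Pq_ne_zero m)
  have h1 := Dp_mul_Pq m
  have h2 : Pq (2*m) = Pq m * Mid m m := by
    have := Pq_split m m
    rwa [show m + m = 2*m by omega] at this
  rw [Θ]
  calc Pq m * (Dp (2*m) * Mid m m) = Dp (2*m) * (Pq m * Mid m m) := by ring
    _ = Dp (2*m) * Pq (2*m) := by rw [← h2]
    _ = (Podd m)^2 * (Pq m)^2 := h1
    _ = Pq m * ((Podd m)^2 * Pq m) := by ring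

lemma coeff_Dp_eq_theta_partial (m r : ℕ) (hr : r ≤ 2*m) (hm : 2 ≤ m) :
    (coeff (R := R) r) (Dp (2*m)) = c r := by
  have h1 : EqUpTo (2*m+2) (Dp (2*m) * Mid m m) (Dp (2*m) * 1) :=
    (EqUpTo.refl _).mul (Mid_eqUpTo m m)
  rw [Dp_mul_Mid, mul_one] at h1
  rw [← h1 r (by omega), coeff_theta_partial m r hr hm]

lemma factor_eqUpTo (j : ℕ) (hj : 0 < j) : EqUpTo j ((1 - X^j) * (h j : R⟦X⟧)) 1 := by
  intro m hm
  rw [sub_mul, one_mul, map_sub, PowerSeries.coeff_X_pow_mul', if_neg (by omega), sub_zero,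
    coeff_h, PowerSeries.coeff_one]
  by_cases hm0 : m = 0
  · subst hm0; simp
  · rw [if_neg (fun hd => absurd (Nat.le_of_dvd (by omega) hd) (by omega)), if_neg hm0]

lemma Dp_tail (N t : ℕ) : EqUpTo (N+1) (Dp (N+t)) (Dp N) := by
  have hsplit : Dp (N+t) = Dp N * ∏ j ∈ Finset.range t, ((1 - X^(N+j+1)) * h (N+j+1)) := by
    rw [Dp, Finset.prod_range_add, ← Dp]
  rw [hsplit]
  have htail : EqUpTo (N+1) (∏ j ∈ Finset.range t, ((1 - X^(N+j+1)) * (h (N+j+1) : R⟦X⟧))) 1 :=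
    EqUpTo.prod _ _ (fun j _ => (factor_eqUpTo (N+j+1) (by omega)).mono (by omega))
  have := (EqUpTo.refl (K := N+1) (Dp N)).mul htail
  rwa [mul_one] at this

lemma gauss (N r : ℕ) (hr : r ≤ N) : (coeff (R := R) r) (Dp N) = c r := by
  have h1 := Dp_tail N (N+4)
  rw [show N + (N+4) = 2*(N+2) by omega] at h1
  rw [← h1 r (by omega)]
  exact coeff_Dp_eq_theta_partial (N+2) r (by omega) (by omega)
noncomputable def Hp (N : ℕ) : R⟦X⟧ := ∏ k ∈ Finset.range N, ((1 + X^(k+1)) * g (k+1))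

noncomputable def PR (N : ℕ) : R⟦X⟧ := ∏ k ∈ Finset.range N, ((1 + X^(k+1))^2 * (g (k+1))^2)

lemma one_add_X_pow_ne_zero (j : ℕ) (hj : 0 < j) : (1 + X^j : R⟦X⟧) ≠ 0 := by
  intro hf
  have h0 : constantCoeff (R := R) (1 + X^j : R⟦X⟧) = 1 := by
    rw [map_add, map_one, map_pow, PowerSeries.constantCoeff_X, zero_pow (by omega), add_zero]
  rw [hf, map_zero] at h0
  exact one_ne_zero h0.symm

lemma one_sub_X_pow_ne_zero (j : ℕ) (hj : 0 < j) : (1 - X^j : R⟦X⟧) ≠ 0 := by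
  intro hf
  have h0 : constantCoeff (R := R) (1 - X^j : R⟦X⟧) = 1 := by
    rw [map_sub, map_one, map_pow, PowerSeries.constantCoeff_X, zero_pow (by omega), sub_zero]
  rw [hf, map_zero] at h0
  exact one_ne_zero h0.symm

lemma factor_cube (j : ℕ) (hj : 0 < j) :
    ((1 + X^j)^2 * (g j)^2 : R⟦X⟧) = ((1 + X^j) * g j)^3 * ((1 - X^j) * h j) := by
  have hW : ((1 + X^j) * (1 - X^j)^3 : R⟦X⟧) ≠ 0 :=
    mul_ne_zero (one_add_X_pow_ne_zero j hj)
      (pow_ne_zero 3 (one_sub_X_pow_ne_zero j hj))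
  apply mul_right_cancel₀ hW
  have hg := one_sub_mul_g j hj (S := R)
  have hh := one_add_mul_h j hj (S := R)
  calc ((1 + X^j)^2 * (g j)^2 * ((1 + X^j) * (1 - X^j)^3) : R⟦X⟧)
      = ((1 + X^j)^3 * ((1 - X^j) * g j)^2 * (1 - X^j) : R⟦X⟧) := by ring
    _ = ((1 + X^j)^3 * (1 - X^j) : R⟦X⟧) := by rw [hg]; ring
    _ = ((1 + X^j)^3 * ((1 - X^j) * g j)^3 * ((1 + X^j) * h j) * (1 - X^j) : R⟦X⟧) := by
        rw [hg, hh]; ring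
    _ = (((1 + X^j) * g j)^3 * ((1 - X^j) * h j) * ((1 + X^j) * (1 - X^j)^3) : R⟦X⟧) := by ring

lemma PR_eq (N : ℕ) : PR N = (Hp N)^3 * Dp N := by
  rw [PR, Hp, Dp, ← Finset.prod_pow, ← Finset.prod_mul_distrib]
  apply Finset.prod_congr rfl
  intro k _
  exact factor_cube (k+1) (by omega)

lemma Hp_mul_Dp (N : ℕ) : Hp N * Dp N = 1 := by
  rw [Hp, Dp, ← Finset.prod_mul_distrib]
  apply Finset.prod_eq_one
  intro k _
  have hg := one_sub_mul_g (k+1) (by omega : 0 < k+1) (S := R)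
  have hh := one_add_mul_h (k+1) (by omega : 0 < k+1) (S := R)
  calc ((1 + X^(k+1)) * g (k+1) * ((1 - X^(k+1)) * h (k+1)) : R⟦X⟧)
      = (((1 - X^(k+1)) * g (k+1)) * ((1 + X^(k+1)) * h (k+1)) : R⟦X⟧) := by ring
    _ = 1 := by rw [hg, hh, one_mul]

noncomputable def σ : R⟦X⟧ := θ⁻¹

lemma theta_mul_sigma : θ * σ = 1 := by
  apply PowerSeries.mul_inv_cancel
  rw [constantCoeff_theta]
  exact one_ne_zero

/-- main congruence chain: coefficient 3n of the product equals (-1)^n r2 n in ZMod 3 -/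
lemma coeff_PR (n : ℕ) : (coeff (R := R) (3*n)) (PR (3*n+1)) = (-1)^n * (r2 n : R) := by
  set N := 3*n+1 with hN
  -- Dp N ≡ θ
  have hDθ : EqUpTo (3*n+1) (Dp N) θ := by
    intro r hr
    rw [gauss N r (by omega), coeff_theta]
  -- Hp N ≡ σ
  have hHσ : EqUpTo (3*n+1) (Hp N) σ := by
    have h1 : EqUpTo (3*n+1) (Hp N * Dp N) (Hp N * θ) := (EqUpTo.refl _).mul hDθ
    rw [Hp_mul_Dp] at h1
    have h2 : EqUpTo (3*n+1) (1 * σ) (Hp N * θ * σ) := h1.mul (EqUpTo.refl σ)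
    have h3 : Hp N * θ * σ = Hp N := by
      rw [mul_assoc, theta_mul_sigma, mul_one]
    rw [h3, one_mul] at h2
    exact h2.symm
  -- PR ≡ σ^3 * θ
  have hPR : EqUpTo (3*n+1) (PR N) (σ^3 * θ) := by
    have h1 : EqUpTo (3*n+1) ((Hp N)^3 * Dp N) (σ^3 * θ) := by
      have := ((hHσ.mul hHσ).mul hHσ).mul hDθ
      have e1 : Hp N * Hp N * Hp N * Dp N = (Hp N)^3 * Dp N := by ring
      have e2 : σ * σ * σ * θ = σ^3 * θ := by ring
      rwa [e1, e2] at this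
    rw [PR_eq]
    exact h1
  rw [hPR (3*n) (by omega)]
  -- dissection
  have hdis : (coeff (R := R) (3*n)) (σ^3 * θ) = (coeff (R := R) n) (σ * θ^3) := by
    have hθ3 : ∀ b, (coeff (R := R) b) (θ^3) = c (3*b) := by
      intro b
      rw [coeff_cube]
      by_cases hd : 3 ∣ b
      · rw [if_pos hd, coeff_theta]
        obtain ⟨k, rfl⟩ := hd
        rw [Nat.mul_div_cancel_left _ (by omega : 0 < 3)]
        -- c (3*(3*k)) = c k
        have h9 : 3*(3*k) = 9*k := by ring
        rw [h9]
        have hsq9 : sq (9*k) = sq k := by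
          by_cases hks : IsSquare k
          · obtain ⟨r, rfl⟩ := hks
            have h99 : 9*(r*r) = (3*r)*(3*r) := by ring
            rw [h99, sq_square, sq_square]
            by_cases hr0 : r = 0
            · subst hr0; simp
            · rw [if_neg hr0, if_neg (by omega)]
          · have hks9 : ¬ IsSquare (9*k) := by
              intro ⟨t, ht⟩
              apply hks
              have h3t : 3 ∣ t := by
                have : (3:ℕ) ∣ t * t := ⟨3*k, by omega⟩
                rcases (Nat.prime_three.dvd_mul).mp this with h | h <;> exact h
              obtain ⟨u, rfl⟩ := h3t
              have h9 : 9*k = 9*(u*u) := by rw [ht]; ring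
              exact ⟨u, by omega⟩
            rw [sq_of_not_square hks, sq_of_not_square hks9]
        rw [c, c, hsq9, neg_one_pow_congr (show (9*k) % 2 = k % 2 by omega)]
      · rw [if_neg hd]
        have hns : ¬ IsSquare (3*b) := by
          intro ⟨t, ht⟩
          apply hd
          have h3t : 3 ∣ t := by
            have : (3:ℕ) ∣ t * t := ⟨b, by omega⟩
            rcases (Nat.prime_three.dvd_mul).mp this with hh | hh <;> exact hh
          obtain ⟨u, rfl⟩ := h3t
          have h9 : 3*b = 9*(u*u) := by rw [ht]; ring
          exact ⟨3*(u*u), by omega⟩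
        rw [c, sq_of_not_square hns]
        simp
    rw [PowerSeries.coeff_mul, PowerSeries.coeff_mul,
      Finset.Nat.sum_antidiagonal_eq_sum_range_succ_mk,
      Finset.Nat.sum_antidiagonal_eq_sum_range_succ_mk]
    have hterm : ∀ i ∈ Finset.range (3*n+1),
        (coeff (R := R) i) (σ^3) * (coeff (R := R) (3*n-i)) θ
        = if 3 ∣ i then (coeff (R := R) (i/3)) σ * c (3*n - 3*(i/3)) else 0 := by
      intro i hi
      rw [coeff_cube, coeff_theta]
      by_cases hd : 3 ∣ i
      · rw [if_pos hd, if_pos hd]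
        obtain ⟨k, rfl⟩ := hd
        rw [Nat.mul_div_cancel_left _ (by omega : 0 < 3)]
      · rw [if_neg hd, if_neg hd, zero_mul]
    rw [Finset.sum_congr rfl hterm]
    have hdiv3 : ∀ (F : ℕ → R) (nn : ℕ),
        ∑ i ∈ Finset.range (3*nn+1), (if 3 ∣ i then F (i/3) else 0)
        = ∑ i ∈ Finset.range (nn+1), F i := by
      intro F nn
      induction nn with
      | zero => simp
      | succ m ihm =>
          rw [show 3*(m+1)+1 = (3*m+1)+1+1+1 by omega, Finset.sum_range_succ,
            Finset.sum_range_succ, Finset.sum_range_succ, ihm,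
            if_neg (by omega), if_neg (by omega), if_pos (by omega : (3:ℕ) ∣ 3*m+1+1+1),
            Finset.sum_range_succ, show (3*m+1+1+1)/3 = m+1 by omega,
            Finset.sum_range_succ (f := F) (n := m+1), Finset.sum_range_succ (f := F) (n := m)]
          ring
    rw [hdiv3 (fun k => (coeff (R := R) k) σ * c (3*n - 3*k)) n]
    apply Finset.sum_congr rfl
    intro i hi
    simp only [Finset.mem_range] at hi
    rw [hθ3 (n-i), show 3*(n-i) = 3*n - 3*i by omega]
  rw [hdis]
  have hfin : σ * θ^3 = θ^2 := by
    have : σ * θ^3 = (θ * σ) * θ^2 := by ring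
    rw [this, theta_mul_sigma, one_mul]
  rw [hfin, coeff_theta_sq]
noncomputable def PZ (N : ℕ) : ℤ⟦X⟧ := ∏ k ∈ Finset.range N, ((1 + X^(k+1))^2 * (g (k+1))^2)

lemma map_g {S T : Type*} [CommRing S] [CommRing T] (f : S →+* T) (j : ℕ) :
    PowerSeries.map f (g j) = g j := by
  ext i
  rw [PowerSeries.coeff_map, coeff_g, coeff_g]
  split_ifs
  · exact map_one f
  · exact map_zero f

lemma g_eq_inv_Q (j : ℕ) (hj : 0 < j) : (g j : ℚ⟦X⟧) = (1 - X^j)⁻¹ := by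
  rw [PowerSeries.eq_inv_iff_mul_eq_one]
  · rw [mul_comm]; exact one_sub_mul_g j hj
  · rw [map_sub, map_one, map_pow, PowerSeries.constantCoeff_X, zero_pow (by omega), sub_zero]
    exact one_ne_zero

lemma map_PZ_Q (N : ℕ) :
    PowerSeries.map (Int.castRingHom ℚ) (PZ N)
      = ∏ k ∈ Finset.range N, ((1 + X^(k+1))^2 * ((1 - X^(k+1))⁻¹)^2 : ℚ⟦X⟧) := by
  rw [PZ, map_prod]
  apply Finset.prod_congr rfl
  intro k _
  rw [map_mul, map_pow, map_pow, map_add, map_one, map_pow, PowerSeries.map_X,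
    map_g, g_eq_inv_Q (k+1) (by omega)]

lemma map_PZ_R (N : ℕ) : PowerSeries.map (Int.castRingHom R) (PZ N) = PR N := by
  rw [PZ, PR, map_prod]
  apply Finset.prod_congr rfl
  intro k _
  rw [map_mul, map_pow, map_pow, map_add, map_one, map_pow, PowerSeries.map_X, map_g]

lemma ppbar_eq (N : ℕ) : ppbar N = (((coeff (R := ℤ) N) (PZ (N+1)) : ℤ) : ℚ) := by
  rw [ppbar, ← map_PZ_Q (N+1), PowerSeries.coeff_map]
  rfl

lemma coeff_PZ_R (N m : ℕ) : (((coeff (R := ℤ) m) (PZ N) : ℤ) : R) = (coeff (R := R) m) (PR N) := by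
  rw [← map_PZ_R N, PowerSeries.coeff_map]
  rfl

end PPB

theorem ppbar_3n_mod3 (n : ℕ) :
    ∃ m : ℤ, ppbar (3 * n) - (-1) ^ n * (r2 n : ℚ) = 3 * m := by
  set a : ℤ := (PowerSeries.coeff (R := ℤ) (3*n)) (PPB.PZ (3*n+1)) with ha
  have h1 : ppbar (3*n) = (a : ℚ) := PPB.ppbar_eq (3*n)
  have h2 : (a : PPB.R) = (-1)^n * (r2 n : PPB.R) := by
    rw [ha, PPB.coeff_PZ_R, PPB.coeff_PR n]
  have h3 : ((a - (-1)^n * (r2 n : ℤ) : ℤ) : PPB.R) = 0 := by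
    push_cast
    rw [h2]
    ring
  have h4 : (3 : ℤ) ∣ (a - (-1)^n * (r2 n : ℤ)) := by
    have := (ZMod.intCast_zmod_eq_zero_iff_dvd (a - (-1)^n * (r2 n : ℤ)) 3).mp h3
    exact_mod_cast this
  obtain ⟨k, hk⟩ := h4
  refine ⟨k, ?_⟩
  rw [h1]
  have := congrArg (fun z : ℤ => (z : ℚ)) hk
  push_cast at this
  linarith
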